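/- arXiv:2404.15986 — 2 statements merged into one kernel-verified Lean document; each statement's English description precedes it below -/
import Mathlib

section
/- In the Set Cover fitness graph, let S ⊆ V be a seed set such that the sets in S∩V₁ do not cover V₂ (i.e., some e ∈ V₂ belongs to no A ∈ S∩V₁). Then the fixation probability satisfies fp_𝒢(S) ≤ 1 − ((1/n)/((1/n)+(n−1)·y))^n. -/
open Finset
open scoped Classical

/-- A fitness graph: a finite strongly connected weighted directed graph together with
mutant and resident fitness functions. `w u v > 0` encodes that `(u,v)` is an edge
of non-zero weight; `w u ·` is a probability distribution. -/
structure FitnessGraph (V : Type) [Fintype V] [DecidableEq V] where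
  w : V → V → ℝ
  m : V → ℝ
  r : V → ℝ
  w_nonneg : ∀ u v, 0 ≤ w u v
  w_rowsum : ∀ u, ∑ v, w u v = 1
  strongly_connected : ∀ u v : V, Relation.ReflTransGen (fun a b => 0 < w a b) u v
  m_pos : ∀ u, 0 < m u
  r_pos : ∀ u, 0 < r u

variable {V : Type} [Fintype V] [DecidableEq V]

/-- A fitness graph is mutant-biased if `m(u) ≥ r(u)` for every node `u`. -/
def FitnessGraph.MutantBiased (G : FitnessGraph V) : Prop :=
  ∀ u, G.r u ≤ G.m u

/-- The (out-)degree of a node: the number of neighbors along edges of non-zero weight. -/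
noncomputable def FitnessGraph.deg (G : FitnessGraph V) (u : V) : ℕ :=
  (Finset.univ.filter fun v => 0 < G.w u v).card

/-- A fitness graph is undirected if its edge relation is symmetric and the weights
are uniform: `w(u,v) = 1/d(u)` for every edge `(u,v)`. -/
def FitnessGraph.Undirected (G : FitnessGraph V) : Prop :=
  (∀ u v, 0 < G.w u v → 0 < G.w v u) ∧
  ∀ u v, 0 < G.w u v → G.w u v = 1 / (G.deg u : ℝ)

/-- The fitness of node `u` in configuration `X`: `m(u)` if `u` is a mutant, `r(u)` otherwise. -/
def FitnessGraph.fit (G : FitnessGraph V) (X : Finset V) (u : V) : ℝ :=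
  if u ∈ X then G.m u else G.r u

/-- Total population fitness in configuration `X`. -/
def FitnessGraph.totalFit (G : FitnessGraph V) (X : Finset V) : ℝ :=
  ∑ u, G.fit X u

/-- The configuration resulting from `X` when `u` reproduces and replaces `v`. -/
def moranNext (X : Finset V) (u v : V) : Finset V :=
  if u ∈ X then insert v X else X.erase v

/-- One-step transition probability of the Heterogeneous Moran process. -/
noncomputable def FitnessGraph.step (G : FitnessGraph V) (X Y : Finset V) : ℝ :=
  ∑ u, ∑ v, (G.fit X u / G.totalFit X) * G.w u v * (if moranNext X u v = Y then 1 else 0)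

/-- `t`-step transition probability of the Heterogeneous Moran process. -/
noncomputable def FitnessGraph.stepN (G : FitnessGraph V) : ℕ → Finset V → Finset V → ℝ
  | 0, X, Y => if X = Y then 1 else 0
  | t + 1, X, Y => ∑ Z, FitnessGraph.stepN G t X Z * G.step Z Y

/-- Fixation probability: the probability that, started from seed set `S`, the process
eventually reaches the all-mutant configuration `V`; since `V` is absorbing this equals
`⨆ t, P(X_t = V)`. -/
noncomputable def FitnessGraph.fp (G : FitnessGraph V) (S : Finset V) : ℝ :=
  ⨆ t : ℕ, G.stepN t S Finset.univ

/-- One-step transition probability of the Moran process stopped upon reaching the set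
of configurations `A` (configurations in `A` are made absorbing). -/
noncomputable def stopStep (G : FitnessGraph V) (A : Set (Finset V)) (X Y : Finset V) : ℝ :=
  if X ∈ A then (if Y = X then 1 else 0) else G.step X Y

/-- `t`-step transition probability of the stopped process. -/
noncomputable def stopStepN (G : FitnessGraph V) (A : Set (Finset V)) :
    ℕ → Finset V → Finset V → ℝ
  | 0, X, Y => if X = Y then 1 else 0
  | t + 1, X, Y => ∑ Z, stopStepN G A t X Z * stopStep G A Z Y

/-- The probability that the Heterogeneous Moran process started at `X0` ever reaches a
configuration in `A`: the supremum over `t` of the probability that the process stopped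
at `A` is in `A` at time `t`. -/
noncomputable def reachProb (G : FitnessGraph V) (A : Set (Finset V)) (X0 : Finset V) : ℝ :=
  ⨆ t : ℕ, ∑ Y ∈ Finset.univ.filter (fun Y => Y ∈ A), stopStepN G A t X0 Y

/-- The Set Cover fitness graph for an instance `(U, 𝒮)` with parameters `x ≥ 1` and
`0 < y ≤ 1`: the vertex set is `V₁ ⊔ V₂` with `V₁ = 𝒮`, `V₂ = U`; there is an edge from
`A ∈ V₁` to each `e ∈ A` and all edges from `V₂` to `V₁`, with uniform weights;
residents have fitness `1` everywhere, mutants have fitness `x` on `V₁` and `y` on `V₂`. -/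
def IsSetCoverGraph {U : Type} [Fintype U] [DecidableEq U] (𝒮 : Finset (Finset U))
    (x y : ℝ) (G : FitnessGraph ({A // A ∈ 𝒮} ⊕ U)) : Prop :=
  (∀ (A : {A // A ∈ 𝒮}) (e : U),
      G.w (Sum.inl A) (Sum.inr e) = if e ∈ A.1 then 1 / (A.1.card : ℝ) else 0) ∧
  (∀ A B : {A // A ∈ 𝒮}, G.w (Sum.inl A) (Sum.inl B) = 0) ∧
  (∀ (e : U) (A : {A // A ∈ 𝒮}), G.w (Sum.inr e) (Sum.inl A) = 1 / (𝒮.card : ℝ)) ∧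
  (∀ e e' : U, G.w (Sum.inr e) (Sum.inr e') = 0) ∧
  (∀ A : {A // A ∈ 𝒮}, G.m (Sum.inl A) = x) ∧
  (∀ e : U, G.m (Sum.inr e) = y) ∧
  (∀ u : {A // A ∈ 𝒮} ⊕ U, G.r u = 1)

section GeneralLemmas

variable {V : Type} [Fintype V] [DecidableEq V]

lemma FitnessGraph.fit_pos (G : FitnessGraph V) (X : Finset V) (u : V) : 0 < G.fit X u := by
  unfold FitnessGraph.fit
  split
  · exact G.m_pos u
  · exact G.r_pos u

lemma FitnessGraph.totalFit_pos [Nonempty V] (G : FitnessGraph V) (X : Finset V) :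
    0 < G.totalFit X :=
  Finset.sum_pos (fun u _ => G.fit_pos X u) Finset.univ_nonempty

lemma FitnessGraph.coef_nonneg [Nonempty V] (G : FitnessGraph V) (X : Finset V) (u v : V) :
    0 ≤ G.fit X u / G.totalFit X * G.w u v :=
  mul_nonneg (div_nonneg (G.fit_pos X u).le (G.totalFit_pos X).le) (G.w_nonneg u v)

lemma FitnessGraph.coef_sum [Nonempty V] (G : FitnessGraph V) (X : Finset V) :
    ∑ u, ∑ v, G.fit X u / G.totalFit X * G.w u v = 1 := by
  have h1 : ∀ u : V, ∑ v, G.fit X u / G.totalFit X * G.w u v = G.fit X u / G.totalFit X := by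
    intro u
    rw [← Finset.mul_sum, G.w_rowsum u, mul_one]
  simp only [h1]
  rw [← Finset.sum_div]
  exact div_self (G.totalFit_pos X).ne'

lemma FitnessGraph.step_weight [Nonempty V] (G : FitnessGraph V) (X : Finset V)
    (g : Finset V → ℝ) :
    ∑ Y, G.step X Y * g Y =
      ∑ u, ∑ v, G.fit X u / G.totalFit X * G.w u v * g (moranNext X u v) := by
  unfold FitnessGraph.step
  simp only [Finset.sum_mul]
  rw [Finset.sum_comm]
  refine Finset.sum_congr rfl fun u _ => ?_
  rw [Finset.sum_comm]
  refine Finset.sum_congr rfl fun v _ => ?_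
  have h : ∀ Y : Finset V,
      G.fit X u / G.totalFit X * G.w u v * (if moranNext X u v = Y then 1 else 0) * g Y
        = if moranNext X u v = Y then G.fit X u / G.totalFit X * G.w u v * g Y else 0 := by
    intro Y
    split <;> simp
  simp only [h]
  rw [Finset.sum_ite_eq]
  simp

lemma FitnessGraph.step_nonneg [Nonempty V] (G : FitnessGraph V) (X Y : Finset V) :
    0 ≤ G.step X Y := by
  refine Finset.sum_nonneg fun u _ => Finset.sum_nonneg fun v _ => ?_
  refine mul_nonneg (G.coef_nonneg X u v) ?_
  split <;> norm_num

lemma FitnessGraph.step_sum [Nonempty V] (G : FitnessGraph V) (X : Finset V) :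
    ∑ Y, G.step X Y = 1 := by
  have := G.step_weight X (fun _ => 1)
  simpa [G.coef_sum X] using this

end GeneralLemmas
set_option linter.unusedSectionVars false

section GeneralLemmas2

variable {V : Type} [Fintype V] [DecidableEq V]

lemma FitnessGraph.stepN_nonneg [Nonempty V] (G : FitnessGraph V) (t : ℕ) (X Y : Finset V) :
    0 ≤ G.stepN t X Y := by
  induction t generalizing X Y with
  | zero =>
    unfold FitnessGraph.stepN
    split <;> norm_num
  | succ t ih =>
    unfold FitnessGraph.stepN
    exact Finset.sum_nonneg fun Z _ => mul_nonneg (ih X Z) (G.step_nonneg Z Y)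

lemma FitnessGraph.stepN_sum [Nonempty V] (G : FitnessGraph V) (t : ℕ) (X : Finset V) :
    ∑ Y, G.stepN t X Y = 1 := by
  induction t generalizing X with
  | zero =>
    unfold FitnessGraph.stepN
    simp
  | succ t ih =>
    unfold FitnessGraph.stepN
    rw [Finset.sum_comm]
    have h : ∀ Z : Finset V, ∑ Y, G.stepN t X Z * G.step Z Y = G.stepN t X Z := by
      intro Z
      rw [← Finset.mul_sum, G.step_sum Z, mul_one]
    simp only [h]
    exact ih X

lemma FitnessGraph.stepN_le_one [Nonempty V] (G : FitnessGraph V) (t : ℕ) (X Y : Finset V) :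
    G.stepN t X Y ≤ 1 := by
  calc G.stepN t X Y ≤ ∑ Z, G.stepN t X Z :=
        Finset.single_le_sum (fun Z _ => G.stepN_nonneg t X Z) (Finset.mem_univ Y)
    _ = 1 := G.stepN_sum t X

lemma FitnessGraph.stepN_front [Nonempty V] (G : FitnessGraph V) (t : ℕ) (X W : Finset V) :
    G.stepN (t + 1) X W = ∑ Y, G.step X Y * G.stepN t Y W := by
  induction t generalizing W with
  | zero =>
    show (∑ Z, G.stepN 0 X Z * G.step Z W) = _
    have h1 : ∀ Z : Finset V, G.stepN 0 X Z * G.step Z W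
        = if X = Z then G.step Z W else 0 := by
      intro Z
      unfold FitnessGraph.stepN
      split <;> simp
    have h2 : ∀ Y : Finset V, G.step X Y * G.stepN 0 Y W
        = if W = Y then G.step X Y else 0 := by
      intro Y
      unfold FitnessGraph.stepN
      split
      · rename_i hh
        simp [hh.symm]
      · rename_i hh
        have : ¬ (W = Y) := fun h => hh h.symm
        simp [this]
    simp only [h1, h2, Finset.sum_ite_eq]
    simp
  | succ t ih =>
    show (∑ Z, G.stepN (t + 1) X Z * G.step Z W) = _
    have h : ∀ Z : Finset V, G.stepN (t + 1) X Z * G.step Z W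
        = ∑ Y, G.step X Y * (G.stepN t Y Z * G.step Z W) := by
      intro Z
      rw [ih Z, Finset.sum_mul]
      refine Finset.sum_congr rfl fun Y _ => by ring
    simp only [h]
    rw [Finset.sum_comm]
    refine Finset.sum_congr rfl fun Y _ => ?_
    rw [← Finset.mul_sum]
    rfl

lemma moranNext_empty (u v : V) : moranNext (∅ : Finset V) u v = ∅ := by
  unfold moranNext
  simp

lemma moranNext_univ (u v : V) : moranNext (Finset.univ : Finset V) u v = Finset.univ := by
  unfold moranNext
  simp

lemma FitnessGraph.step_self [Nonempty V] (G : FitnessGraph V) (X : Finset V)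
    (hX : ∀ u v : V, moranNext X u v = X) : G.step X X = 1 := by
  unfold FitnessGraph.step
  have h : ∀ u v : V, G.fit X u / G.totalFit X * G.w u v * (if moranNext X u v = X then 1 else 0)
      = G.fit X u / G.totalFit X * G.w u v := by
    intro u v
    rw [hX u v]
    simp
  simp only [h]
  exact G.coef_sum X

lemma FitnessGraph.stepN_mono_absorb [Nonempty V] (G : FitnessGraph V) (X A : Finset V)
    (hA : ∀ u v : V, moranNext A u v = A) :
    Monotone fun t => G.stepN t X A := by
  apply monotone_nat_of_le_succ
  intro t
  show G.stepN t X A ≤ G.stepN (t + 1) X A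
  have : G.stepN (t + 1) X A = ∑ Z, G.stepN t X Z * G.step Z A := rfl
  rw [this]
  calc G.stepN t X A = G.stepN t X A * G.step A A := by rw [G.step_self A hA, mul_one]
    _ ≤ ∑ Z, G.stepN t X Z * G.step Z A :=
        Finset.single_le_sum
          (fun Z _ => mul_nonneg (G.stepN_nonneg t X Z) (G.step_nonneg Z A))
          (Finset.mem_univ A)

end GeneralLemmas2
section HitZero

variable {V : Type} [Fintype V] [DecidableEq V]

/-- Probability that the process eventually hits the empty configuration (extinction). -/
noncomputable def hitZero (G : FitnessGraph V) (X : Finset V) : ℝ :=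
  ⨆ t : ℕ, G.stepN t X ∅

lemma hitZero_bdd [Nonempty V] (G : FitnessGraph V) (X : Finset V) :
    BddAbove (Set.range fun t : ℕ => G.stepN t X ∅) := by
  refine ⟨1, ?_⟩
  rintro r ⟨t, rfl⟩
  exact G.stepN_le_one t X ∅

lemma hitZero_nonneg [Nonempty V] (G : FitnessGraph V) (X : Finset V) : 0 ≤ hitZero G X :=
  le_trans (G.stepN_nonneg 0 X ∅) (le_ciSup (hitZero_bdd G X) 0)

lemma hitZero_le_one [Nonempty V] (G : FitnessGraph V) (X : Finset V) : hitZero G X ≤ 1 :=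
  ciSup_le fun t => G.stepN_le_one t X ∅

lemma stepN_le_hitZero [Nonempty V] (G : FitnessGraph V) (t : ℕ) (X : Finset V) :
    G.stepN t X ∅ ≤ hitZero G X :=
  le_ciSup (hitZero_bdd G X) t

lemma hitZero_empty [Nonempty V] (G : FitnessGraph V) : hitZero G (∅ : Finset V) = 1 := by
  have h : ∀ t : ℕ, G.stepN t (∅ : Finset V) ∅ = 1 := by
    intro t
    induction t with
    | zero =>
      unfold FitnessGraph.stepN
      simp
    | succ t ih =>
      have h1 : G.stepN t (∅ : Finset V) ∅ ≤ G.stepN (t + 1) (∅ : Finset V) ∅ :=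
        G.stepN_mono_absorb ∅ ∅ (fun u v => moranNext_empty u v) (Nat.le_succ t)
      have h2 := G.stepN_le_one (t + 1) (∅ : Finset V) ∅
      linarith [ih]
  unfold hitZero
  rw [show (fun t : ℕ => G.stepN t (∅ : Finset V) ∅) = fun _ => (1 : ℝ) from funext h]
  exact ciSup_const

lemma hitZero_superharmonic [Nonempty V] (G : FitnessGraph V) (X : Finset V) :
    ∑ Y, G.step X Y * hitZero G Y ≤ hitZero G X := by
  have htend : Filter.Tendsto (fun t : ℕ => ∑ Y, G.step X Y * G.stepN t Y ∅)
      Filter.atTop (nhds (∑ Y, G.step X Y * hitZero G Y)) := by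
    refine tendsto_finset_sum _ fun Y _ => ?_
    exact Filter.Tendsto.const_mul _
      (tendsto_atTop_ciSup (G.stepN_mono_absorb Y ∅ (fun u v => moranNext_empty u v))
        (hitZero_bdd G Y))
  refine le_of_tendsto htend (Filter.Eventually.of_forall fun t => ?_)
  rw [← G.stepN_front t X ∅]
  exact stepN_le_hitZero G (t + 1) X

lemma fp_le_one_sub_hitZero [Nonempty V] (G : FitnessGraph V) (S : Finset V) :
    G.fp S ≤ 1 - hitZero G S := by
  have key : ∀ t t' : ℕ, G.stepN t S Finset.univ + G.stepN t' S ∅ ≤ 1 := by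
    intro t t'
    set M := max t t'
    have h1 : G.stepN t S Finset.univ ≤ G.stepN M S Finset.univ :=
      G.stepN_mono_absorb S Finset.univ (fun u v => moranNext_univ u v) (le_max_left t t')
    have h2 : G.stepN t' S ∅ ≤ G.stepN M S ∅ :=
      G.stepN_mono_absorb S ∅ (fun u v => moranNext_empty u v) (le_max_right t t')
    have hne : (Finset.univ : Finset V) ≠ (∅ : Finset V) :=
      Finset.nonempty_iff_ne_empty.mp Finset.univ_nonempty
    have h3 : G.stepN M S Finset.univ + G.stepN M S ∅ ≤ 1 := by
      have hsub : ({Finset.univ, ∅} : Finset (Finset V)) ⊆ Finset.univ :=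
        Finset.subset_univ _
      have := Finset.sum_le_sum_of_subset_of_nonneg hsub
        (fun Z _ _ => G.stepN_nonneg M S Z) (f := fun Z => G.stepN M S Z)
      rw [Finset.sum_pair hne, G.stepN_sum M S] at this
      exact this
    linarith
  apply ciSup_le
  intro t
  have h4 : hitZero G S ≤ 1 - G.stepN t S Finset.univ :=
    ciSup_le fun t' => by linarith [key t t']
  linarith

end HitZero
section SetCoverAux

variable {U : Type} [Fintype U] [DecidableEq U]

/-- Closure of a configuration: add every element vertex covered by a mutant set vertex. -/
noncomputable def scCl (𝒮 : Finset (Finset U)) (X : Finset ({A // A ∈ 𝒮} ⊕ U)) :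
    Finset ({A // A ∈ 𝒮} ⊕ U) :=
  X ∪ Finset.univ.filter (fun v => ∃ (A : {A // A ∈ 𝒮}) (e : U),
    v = Sum.inr e ∧ Sum.inl A ∈ X ∧ e ∈ A.1)

/-- The mutant sets of a configuration do not cover the universe. -/
def SCNonCov (𝒮 : Finset (Finset U)) (X : Finset ({A // A ∈ 𝒮} ⊕ U)) : Prop :=
  ∃ e : U, ∀ A : {A // A ∈ 𝒮}, Sum.inl A ∈ X → e ∉ A.1

lemma mem_scCl {𝒮 : Finset (Finset U)} {X : Finset ({A // A ∈ 𝒮} ⊕ U)}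
    {v : {A // A ∈ 𝒮} ⊕ U} :
    v ∈ scCl 𝒮 X ↔ v ∈ X ∨ ∃ (A : {A // A ∈ 𝒮}) (e : U),
      v = Sum.inr e ∧ Sum.inl A ∈ X ∧ e ∈ A.1 := by
  simp [scCl]

lemma subset_scCl {𝒮 : Finset (Finset U)} (X : Finset ({A // A ∈ 𝒮} ⊕ U)) :
    X ⊆ scCl 𝒮 X :=
  Finset.subset_union_left

lemma scCl_mono {𝒮 : Finset (Finset U)} {X X' : Finset ({A // A ∈ 𝒮} ⊕ U)}
    (h : X ⊆ X') : scCl 𝒮 X ⊆ scCl 𝒮 X' := by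
  intro v hv
  rw [mem_scCl] at hv ⊢
  rcases hv with hv | ⟨A, e, rfl, hA, he⟩
  · exact Or.inl (h hv)
  · exact Or.inr ⟨A, e, rfl, h hA, he⟩

lemma scCl_empty (𝒮 : Finset (Finset U)) :
    scCl 𝒮 (∅ : Finset ({A // A ∈ 𝒮} ⊕ U)) = ∅ := by
  ext v
  simp [mem_scCl]

lemma inl_mem_scCl {𝒮 : Finset (Finset U)} {X : Finset ({A // A ∈ 𝒮} ⊕ U)}
    {A : {A // A ∈ 𝒮}} :
    Sum.inl A ∈ scCl 𝒮 X ↔ Sum.inl A ∈ X := by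
  rw [mem_scCl]
  constructor
  · rintro (h | ⟨B, e, he, _, _⟩)
    · exact h
    · exact absurd he (by simp)
  · exact Or.inl

lemma inr_mem_scCl {𝒮 : Finset (Finset U)} {X : Finset ({A // A ∈ 𝒮} ⊕ U)} {e : U} :
    Sum.inr e ∈ scCl 𝒮 X ↔ Sum.inr e ∈ X ∨ ∃ A : {A // A ∈ 𝒮}, Sum.inl A ∈ X ∧ e ∈ A.1 := by
  rw [mem_scCl]
  constructor
  · rintro (h | ⟨A, e', he', hA, hmem⟩)
    · exact Or.inl h
    · rcases Sum.inr.inj he' with rfl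
      exact Or.inr ⟨A, hA, hmem⟩
  · rintro (h | ⟨A, hA, hmem⟩)
    · exact Or.inl h
    · exact Or.inr ⟨A, e, rfl, hA, hmem⟩

lemma scCl_insert_inr {𝒮 : Finset (Finset U)} (X : Finset ({A // A ∈ 𝒮} ⊕ U)) (e : U) :
    scCl 𝒮 (insert (Sum.inr e) X) = insert (Sum.inr e) (scCl 𝒮 X) := by
  ext v
  simp only [mem_scCl, Finset.mem_insert]
  constructor
  · rintro ((rfl | h) | ⟨A, e', rfl, (h | h), hmem⟩)
    · exact Or.inl rfl
    · exact Or.inr (Or.inl h)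
    · exact absurd h (by simp)
    · exact Or.inr (Or.inr ⟨A, e', rfl, h, hmem⟩)
  · rintro (rfl | h | ⟨A, e', rfl, hA, hmem⟩)
    · exact Or.inl (Or.inl rfl)
    · exact Or.inl (Or.inr h)
    · exact Or.inr ⟨A, e', rfl, Or.inr hA, hmem⟩

lemma SCNonCov_of_subset {𝒮 : Finset (Finset U)} {X X' : Finset ({A // A ∈ 𝒮} ⊕ U)}
    (h : X' ⊆ X) (hX : SCNonCov 𝒮 X) : SCNonCov 𝒮 X' := by
  obtain ⟨e, he⟩ := hX
  exact ⟨e, fun A hA => he A (h hA)⟩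

lemma SCNonCov_insert_inr {𝒮 : Finset (Finset U)} {X : Finset ({A // A ∈ 𝒮} ⊕ U)} {e' : U}
    (hX : SCNonCov 𝒮 X) : SCNonCov 𝒮 (insert (Sum.inr e') X) := by
  obtain ⟨e, he⟩ := hX
  refine ⟨e, fun A hA => ?_⟩
  rcases Finset.mem_insert.mp hA with h | h
  · exact absurd h (by simp)
  · exact he A h

end SetCoverAux
section SetCoverMain

variable {U : Type} [Fintype U] [DecidableEq U]

lemma sc_card_eq (𝒮 : Finset (Finset U)) :
    Fintype.card ({A // A ∈ 𝒮} ⊕ U) = 𝒮.card + Fintype.card U := by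
  rw [Fintype.card_sum, Fintype.card_coe]

lemma sc_good_pair {𝒮 : Finset (Finset U)} {x y : ℝ} {G : FitnessGraph ({A // A ∈ 𝒮} ⊕ U)}
    (hcov : ∀ e : U, ∃ A ∈ 𝒮, e ∈ A) (hG : IsSetCoverGraph 𝒮 x y G)
    (X : Finset ({A // A ∈ 𝒮} ⊕ U)) (hNC : SCNonCov 𝒮 X) (hXne : X ≠ ∅) :
    ∃ u v : {A // A ∈ 𝒮} ⊕ U, u ∉ X ∧
      1 / (Fintype.card ({A // A ∈ 𝒮} ⊕ U) : ℝ) ≤ G.w u v ∧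
      SCNonCov 𝒮 (X.erase v) ∧ scCl 𝒮 (X.erase v) ⊂ scCl 𝒮 X := by
  have hcards := sc_card_eq 𝒮
  have hUle : Fintype.card U ≤ Fintype.card ({A // A ∈ 𝒮} ⊕ U) := by omega
  have helper : ∀ e₁ : U, Sum.inr e₁ ∈ X → (∀ A : {A // A ∈ 𝒮}, Sum.inl A ∈ X → e₁ ∉ A.1) →
      ∃ u v : {A // A ∈ 𝒮} ⊕ U, u ∉ X ∧
        1 / (Fintype.card ({A // A ∈ 𝒮} ⊕ U) : ℝ) ≤ G.w u v ∧
        SCNonCov 𝒮 (X.erase v) ∧ scCl 𝒮 (X.erase v) ⊂ scCl 𝒮 X := by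
    intro e₁ h₁ hfree
    obtain ⟨A₁, hA₁S, hA₁e⟩ := hcov e₁
    refine ⟨Sum.inl ⟨A₁, hA₁S⟩, Sum.inr e₁, fun h => hfree ⟨A₁, hA₁S⟩ h hA₁e, ?_, 
      SCNonCov_of_subset (Finset.erase_subset _ _) hNC, ?_⟩
    · rw [hG.1 ⟨A₁, hA₁S⟩ e₁, if_pos hA₁e]
      apply one_div_le_one_div_of_le
      · exact_mod_cast Finset.card_pos.mpr ⟨e₁, hA₁e⟩
      · have : A₁.card ≤ Fintype.card ({A // A ∈ 𝒮} ⊕ U) :=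
          le_trans (le_trans (Finset.card_le_univ A₁) (le_of_eq (Finset.card_univ))) hUle
        exact_mod_cast this
    · rw [Finset.ssubset_iff_of_subset (scCl_mono (Finset.erase_subset _ _))]
      refine ⟨Sum.inr e₁, subset_scCl X h₁, ?_⟩
      rw [inr_mem_scCl]
      rintro (h | ⟨A, hA, hmem⟩)
      · exact Finset.notMem_erase _ _ h
      · exact hfree A (Finset.mem_of_mem_erase hA) hmem
  by_cases hA : ∃ A : {A // A ∈ 𝒮}, Sum.inl A ∈ X
  · obtain ⟨A, hAX⟩ := hA
    by_cases hres : ∃ e₀ : U, Sum.inr e₀ ∉ X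
    · obtain ⟨e₀, he₀⟩ := hres
      refine ⟨Sum.inr e₀, Sum.inl A, he₀, ?_,
        SCNonCov_of_subset (Finset.erase_subset _ _) hNC, ?_⟩
      · rw [hG.2.2.1 e₀ A]
        apply one_div_le_one_div_of_le
        · exact_mod_cast Finset.card_pos.mpr ⟨A.1, A.2⟩
        · have : 𝒮.card ≤ Fintype.card ({A // A ∈ 𝒮} ⊕ U) := by omega
          exact_mod_cast this
      · rw [Finset.ssubset_iff_of_subset (scCl_mono (Finset.erase_subset _ _))]
        refine ⟨Sum.inl A, subset_scCl X hAX, ?_⟩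
        rw [inl_mem_scCl]
        exact Finset.notMem_erase _ _
    · push_neg at hres
      obtain ⟨e, he⟩ := hNC
      exact helper e (hres e) he
  · push_neg at hA
    obtain ⟨v, hv⟩ := Finset.nonempty_iff_ne_empty.mpr hXne
    rcases v with A | e₁
    · exact absurd hv (hA A)
    · exact helper e₁ hv (fun A h => absurd h (hA A))

end SetCoverMain
set_option maxHeartbeats 1000000 in
lemma sc_main {U : Type} [Fintype U] [DecidableEq U] [Nonempty U]
    (𝒮 : Finset (Finset U)) (hcov : ∀ e : U, ∃ A ∈ 𝒮, e ∈ A)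
    (x y : ℝ) (hy0 : 0 < y)
    (G : FitnessGraph ({A // A ∈ 𝒮} ⊕ U)) (hG : IsSetCoverGraph 𝒮 x y G) (k : ℕ) :
    ∀ X : Finset ({A // A ∈ 𝒮} ⊕ U), SCNonCov 𝒮 X → (scCl 𝒮 X).card ≤ k →
      ((1 / (Fintype.card ({A // A ∈ 𝒮} ⊕ U) : ℝ)) /
        (1 / (Fintype.card ({A // A ∈ 𝒮} ⊕ U) : ℝ) +
          ((Fintype.card ({A // A ∈ 𝒮} ⊕ U) : ℝ) - 1) * y)) ^ k ≤ hitZero G X := by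
  have hVne : Nonempty ({A // A ∈ 𝒮} ⊕ U) := ⟨Sum.inr (Classical.arbitrary U)⟩
  set n : ℕ := Fintype.card ({A // A ∈ 𝒮} ⊕ U) with hn
  have hcards : n = 𝒮.card + Fintype.card U := by rw [hn, sc_card_eq]
  have hSne : 𝒮.Nonempty := by
    obtain ⟨A, hA, _⟩ := hcov (Classical.arbitrary U)
    exact ⟨A, hA⟩
  have hScard : 1 ≤ 𝒮.card := Finset.card_pos.mpr hSne
  have hn1 : 1 ≤ n := by rw [hn]; exact Fintype.card_pos
  have hnR : (0:ℝ) < (n:ℝ) := by exact_mod_cast hn1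
  have hnR1 : (1:ℝ) ≤ (n:ℝ) := by exact_mod_cast hn1
  set p : ℝ := (1 / (n:ℝ)) / (1 / (n:ℝ) + ((n:ℝ) - 1) * y) with hpdef
  have hnum : (0:ℝ) < 1 / (n:ℝ) := by positivity
  have hprod : (0:ℝ) ≤ ((n:ℝ) - 1) * y := mul_nonneg (by linarith) hy0.le
  have hden : (0:ℝ) < 1 / (n:ℝ) + ((n:ℝ) - 1) * y := by linarith
  have hp0 : 0 < p := div_pos hnum hden
  have hp1 : p ≤ 1 := by
    rw [hpdef, div_le_one hden]
    linarith
  induction k with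
  | zero =>
    intro X hNC hcard
    have h0 : scCl 𝒮 X = ∅ := Finset.card_eq_zero.mp (le_antisymm hcard (Nat.zero_le _))
    have hX0 : X = ∅ := Finset.subset_empty.mp (h0 ▸ subset_scCl X)
    rw [hX0, hitZero_empty, pow_zero]
  | succ k ih =>
    intro X hNC hcard
    by_cases hle : (scCl 𝒮 X).card ≤ k
    · exact le_trans (pow_le_pow_of_le_one hp0.le hp1 (Nat.le_succ k)) (ih X hNC hle)
    · have hcardeq : (scCl 𝒮 X).card = k + 1 := by omega
      set C : Finset (Finset ({A // A ∈ 𝒮} ⊕ U)) :=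
        Finset.univ.filter (fun Z => SCNonCov 𝒮 Z ∧ (scCl 𝒮 Z).card = k + 1) with hC
      have hXC : X ∈ C := Finset.mem_filter.mpr ⟨Finset.mem_univ X, hNC, hcardeq⟩
      obtain ⟨X0, hX0C, hmin⟩ := Finset.exists_min_image C (hitZero G) ⟨X, hXC⟩
      obtain ⟨-, hNC0, hcard0⟩ := Finset.mem_filter.mp hX0C
      refine le_trans ?_ (hmin X hXC)
      have hX0ne : X0 ≠ ∅ := by
        intro h
        rw [h, scCl_empty] at hcard0
        simp at hcard0
      obtain ⟨us, vs, hus, hwgood, hNCe, hsub⟩ := sc_good_pair hcov hG X0 hNC0 hX0ne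
      rw [← hn] at hwgood
      set F : ℝ := G.totalFit X0 with hF
      have hFpos : 0 < F := G.totalFit_pos X0
      set c : ({A // A ∈ 𝒮} ⊕ U) → ({A // A ∈ 𝒮} ⊕ U) → ℝ :=
        fun u v => G.fit X0 u / F * G.w u v with hc
      have hcnn : ∀ u v, 0 ≤ c u v := fun u v => G.coef_nonneg X0 u v
      set α : ℝ := hitZero G X0 with hα
      have hα0 : 0 ≤ α := hitZero_nonneg G X0
      set PC : Finset ({A // A ∈ 𝒮} ⊕ U) → Prop :=
        fun Z => SCNonCov 𝒮 Z ∧ (scCl 𝒮 Z).card = k + 1 with hPC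
      set PD : Finset ({A // A ∈ 𝒮} ⊕ U) → Prop :=
        fun Z => SCNonCov 𝒮 Z ∧ (scCl 𝒮 Z).card ≤ k with hPD
      set A1 : ℝ := ∑ u, ∑ v, c u v * (if PC (moranNext X0 u v) then 1 else 0) with hA1
      set A2 : ℝ := ∑ u, ∑ v, c u v * (if PD (moranNext X0 u v) then 1 else 0) with hA2
      set A3 : ℝ := ∑ u, ∑ v, c u v *
        (if ¬ PC (moranNext X0 u v) ∧ ¬ PD (moranNext X0 u v) then 1 else 0) with hA3
      have hA1nn : 0 ≤ A1 := Finset.sum_nonneg fun u _ => Finset.sum_nonneg fun v _ =>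
        mul_nonneg (hcnn u v) (by split <;> norm_num)
      have hA2nn : 0 ≤ A2 := Finset.sum_nonneg fun u _ => Finset.sum_nonneg fun v _ =>
        mul_nonneg (hcnn u v) (by split <;> norm_num)
      have hA3nn : 0 ≤ A3 := Finset.sum_nonneg fun u _ => Finset.sum_nonneg fun v _ =>
        mul_nonneg (hcnn u v) (by split <;> norm_num)
      -- Step I : α * A1 + p^k * A2 ≤ α
      have hgle : ∀ Y, (if PC Y then α else if PD Y then p ^ k else 0) ≤ hitZero G Y := by
        intro Y
        by_cases h1 : PC Y
        · rw [if_pos h1]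
          exact hmin Y (Finset.mem_filter.mpr ⟨Finset.mem_univ Y, h1⟩)
        · rw [if_neg h1]
          by_cases h2 : PD Y
          · rw [if_pos h2]
            exact ih Y h2.1 h2.2
          · rw [if_neg h2]
            exact hitZero_nonneg G Y
      have hstep1 : α * A1 + p ^ k * A2 ≤ α := by
        have e1 : ∑ Y, G.step X0 Y * (if PC Y then α else if PD Y then p ^ k else 0)
            ≤ ∑ Y, G.step X0 Y * hitZero G Y :=
          Finset.sum_le_sum fun Y _ => mul_le_mul_of_nonneg_left (hgle Y) (G.step_nonneg X0 Y)
        have e2 := hitZero_superharmonic G X0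
        have e3 := G.step_weight X0 (fun Y => if PC Y then α else if PD Y then p ^ k else 0)
        have e5 : α * A1 + p ^ k * A2 = ∑ u, ∑ v, G.fit X0 u / G.totalFit X0 * G.w u v *
            (if PC (moranNext X0 u v) then α else if PD (moranNext X0 u v) then p ^ k else 0) := by
          rw [hA1, hA2, Finset.mul_sum, Finset.mul_sum, ← Finset.sum_add_distrib]
          refine Finset.sum_congr rfl fun u _ => ?_
          rw [Finset.mul_sum, Finset.mul_sum, ← Finset.sum_add_distrib]
          refine Finset.sum_congr rfl fun v _ => ?_
          show α * (c u v * _) + p ^ k * (c u v * _) = c u v * _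
          by_cases h1 : PC (moranNext X0 u v)
          · have h2 : ¬ PD (moranNext X0 u v) := by
              intro h
              have e1 := h1.2
              have e2 := h.2
              omega
            rw [if_pos h1, if_pos h1, if_neg h2]
            ring
          · rw [if_neg h1, if_neg h1]
            by_cases h2 : PD (moranNext X0 u v)
            · rw [if_pos h2, if_pos h2]
              ring
            · rw [if_neg h2, if_neg h2]
              ring
        rw [e5, ← e3]
        exact le_trans e1 e2
      -- Step II : A1 + A2 + A3 = 1
      have hstep2 : A1 + A2 + A3 = 1 := by
        have e : A1 + A2 + A3 = ∑ u, ∑ v, c u v := by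
          rw [hA1, hA2, hA3, ← Finset.sum_add_distrib, ← Finset.sum_add_distrib]
          refine Finset.sum_congr rfl fun u _ => ?_
          rw [← Finset.sum_add_distrib, ← Finset.sum_add_distrib]
          refine Finset.sum_congr rfl fun v _ => ?_
          by_cases h1 : PC (moranNext X0 u v)
          · have h2 : ¬ PD (moranNext X0 u v) := by
              intro h
              have e1 := h1.2
              have e2 := h.2
              omega
            rw [if_pos h1, if_neg h2, if_neg (fun hcon => hcon.1 h1 :
              ¬ (¬ PC (moranNext X0 u v) ∧ ¬ PD (moranNext X0 u v)))]
            ring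
          · by_cases h2 : PD (moranNext X0 u v)
            · rw [if_neg h1, if_pos h2, if_neg (fun hcon => hcon.2 h2 :
                ¬ (¬ PC (moranNext X0 u v) ∧ ¬ PD (moranNext X0 u v)))]
              ring
            · rw [if_neg h1, if_neg h2, if_pos ⟨h1, h2⟩]
              ring
        rw [e]
        exact G.coef_sum X0
      -- Step III : 1/(n*F) ≤ A2
      have hstep3 : 1 / ((n:ℝ) * F) ≤ A2 := by
        have hm : moranNext X0 us vs = X0.erase vs := by
          simp only [moranNext]
          rw [if_neg hus]
        have hPDm : PD (moranNext X0 us vs) := by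
          rw [hPD, hm]
          refine ⟨hNCe, ?_⟩
          have := Finset.card_lt_card hsub
          omega
        have hfit : G.fit X0 us = 1 := by
          rw [FitnessGraph.fit, if_neg hus, hG.2.2.2.2.2.2 us]
        have hterm : 1 / ((n:ℝ) * F) ≤ c us vs * (if PD (moranNext X0 us vs) then 1 else 0) := by
          rw [if_pos hPDm, mul_one, hc]
          show 1 / ((n:ℝ) * F) ≤ G.fit X0 us / F * G.w us vs
          rw [hfit]
          calc 1 / ((n:ℝ) * F) = 1 / F * (1 / (n:ℝ)) := by
                rw [div_mul_div_comm, one_mul, mul_comm]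
            _ ≤ 1 / F * G.w us vs := by
                apply mul_le_mul_of_nonneg_left hwgood
                positivity
        calc 1 / ((n:ℝ) * F) ≤ c us vs * (if PD (moranNext X0 us vs) then 1 else 0) := hterm
          _ ≤ ∑ v, c us v * (if PD (moranNext X0 us v) then 1 else 0) :=
              Finset.single_le_sum
                (f := fun v => c us v * (if PD (moranNext X0 us v) then 1 else 0))
                (fun v _ => mul_nonneg (hcnn us v) (by split <;> norm_num))
                (Finset.mem_univ vs)
          _ ≤ A2 := by
              rw [hA2]
              exact Finset.single_le_sum
                (f := fun u => ∑ v, c u v * (if PD (moranNext X0 u v) then 1 else 0))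
                (fun u _ => Finset.sum_nonneg fun v _ =>
                  mul_nonneg (hcnn u v) (by split <;> norm_num))
                (Finset.mem_univ us)
      -- Step IV : A3 ≤ (n-1) * y / F
      have hstep4 : A3 ≤ ((n:ℝ) - 1) * y / F := by
        have hpt : ∀ u v, c u v *
            (if ¬ PC (moranNext X0 u v) ∧ ¬ PD (moranNext X0 u v) then 1 else 0)
            ≤ if (u ∈ X0 ∧ u.isRight) then c u v else 0 := by
          intro u v
          by_cases hu : u ∈ X0 ∧ u.isRight
          · rw [if_pos hu]
            calc c u v * _ ≤ c u v * 1 :=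
                  mul_le_mul_of_nonneg_left (by split <;> norm_num) (hcnn u v)
              _ = c u v := mul_one _
          · rw [if_neg hu]
            by_cases huX : u ∈ X0
            · -- u is a mutant set vertex
              have hleft : ¬ u.isRight := fun h => hu ⟨huX, h⟩
              obtain ⟨A, rfl⟩ : ∃ A, u = Sum.inl A := by
                rcases u with A | e
                · exact ⟨A, rfl⟩
                · simp at hleft
              rcases v with B | e'
              · have : c (Sum.inl A) (Sum.inl B) = 0 := by
                  rw [hc]
                  show G.fit X0 _ / F * G.w (Sum.inl A) (Sum.inl B) = 0
                  rw [hG.2.1 A B, mul_zero]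
                rw [this, zero_mul]
              · by_cases he' : e' ∈ A.1
                · have hmn : moranNext X0 (Sum.inl A) (Sum.inr e') = insert (Sum.inr e') X0 := by
                    simp only [moranNext]
                    rw [if_pos huX]
                  have hPCm : PC (moranNext X0 (Sum.inl A) (Sum.inr e')) := by
                    rw [hPC, hmn]
                    refine ⟨SCNonCov_insert_inr hNC0, ?_⟩
                    rw [scCl_insert_inr]
                    rw [Finset.insert_eq_self.mpr (inr_mem_scCl.mpr (Or.inr ⟨A, huX, he'⟩))]
                    exact hcard0
                  have hneg : ¬ (¬ PC (moranNext X0 (Sum.inl A) (Sum.inr e')) ∧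
                      ¬ PD (moranNext X0 (Sum.inl A) (Sum.inr e'))) :=
                    fun hcon => hcon.1 hPCm
                  rw [if_neg hneg, mul_zero]
                · have : c (Sum.inl A) (Sum.inr e') = 0 := by
                    rw [hc]
                    show G.fit X0 _ / F * G.w (Sum.inl A) (Sum.inr e') = 0
                    rw [hG.1 A e', if_neg he', mul_zero]
                  rw [this, zero_mul]
            · -- u is resident : erase lands in PC ∪ PD
              have hmn : moranNext X0 u v = X0.erase v := by
                simp only [moranNext]
                rw [if_neg huX]
              have hNCv : SCNonCov 𝒮 (X0.erase v) :=
                SCNonCov_of_subset (Finset.erase_subset _ _) hNC0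
              have hcardv : (scCl 𝒮 (X0.erase v)).card ≤ k + 1 := by
                calc (scCl 𝒮 (X0.erase v)).card ≤ (scCl 𝒮 X0).card :=
                      Finset.card_le_card (scCl_mono (Finset.erase_subset _ _))
                  _ = k + 1 := hcard0
              have hor : PC (moranNext X0 u v) ∨ PD (moranNext X0 u v) := by
                rw [hmn]
                rcases Nat.lt_or_ge (scCl 𝒮 (X0.erase v)).card (k + 1) with hh | hh
                · exact Or.inr ⟨hNCv, Nat.lt_succ_iff.mp hh⟩
                · exact Or.inl ⟨hNCv, le_antisymm hcardv hh⟩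
              have hneg : ¬ (¬ PC (moranNext X0 u v) ∧ ¬ PD (moranNext X0 u v)) :=
                fun hcon => hor.elim hcon.1 hcon.2
              rw [if_neg hneg, mul_zero]
        have hin : ∀ u : ({A // A ∈ 𝒮} ⊕ U),
            ∑ v, (if (u ∈ X0 ∧ u.isRight) then c u v else 0)
              = if (u ∈ X0 ∧ u.isRight) then G.fit X0 u / F else 0 := by
          intro u
          by_cases hu : u ∈ X0 ∧ u.isRight
          · simp only [if_pos hu]
            rw [hc]
            show (∑ v, G.fit X0 u / F * G.w u v) = G.fit X0 u / F
            rw [← Finset.mul_sum, G.w_rowsum u, mul_one]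
          · simp [hu]
        have h2 : ∀ u : ({A // A ∈ 𝒮} ⊕ U),
            (if (u ∈ X0 ∧ u.isRight) then G.fit X0 u / F else 0)
              ≤ (if u.isRight then y / F else 0) := by
          intro u
          by_cases hu : u ∈ X0 ∧ u.isRight
          · rw [if_pos hu, if_pos hu.2]
            obtain ⟨e', rfl⟩ := Sum.isRight_iff.mp hu.2
            rw [FitnessGraph.fit, if_pos hu.1, hG.2.2.2.2.2.1 e']
          · rw [if_neg hu]
            split
            · positivity
            · exact le_rfl
        have h3 : ∑ u : ({A // A ∈ 𝒮} ⊕ U), (if u.isRight then y / F else 0)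
            = (Fintype.card U : ℝ) * (y / F) := by
          rw [Fintype.sum_sum_type]
          simp [Finset.sum_const, Finset.card_univ]
        calc A3 ≤ ∑ u, ∑ v, (if (u ∈ X0 ∧ u.isRight) then c u v else 0) := by
              rw [hA3]
              exact Finset.sum_le_sum fun u _ => Finset.sum_le_sum fun v _ => hpt u v
          _ = ∑ u : ({A // A ∈ 𝒮} ⊕ U), (if (u ∈ X0 ∧ u.isRight) then G.fit X0 u / F else 0) :=
              Finset.sum_congr rfl fun u _ => hin u
          _ ≤ ∑ u : ({A // A ∈ 𝒮} ⊕ U), (if u.isRight then y / F else 0) :=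
              Finset.sum_le_sum fun u _ => h2 u
          _ = (Fintype.card U : ℝ) * (y / F) := h3
          _ ≤ ((n:ℝ) - 1) * (y / F) := by
              apply mul_le_mul_of_nonneg_right _ (by positivity)
              have hUn : Fintype.card U + 1 ≤ n := by omega
              have : (Fintype.card U : ℝ) + 1 ≤ (n:ℝ) := by exact_mod_cast hUn
              linarith
          _ = ((n:ℝ) - 1) * y / F := by rw [mul_div_assoc]
      -- Step V : conclude
      have hA1eq : A1 = 1 - A2 - A3 := by linarith
      have hmain : p ^ k * A2 ≤ α * A2 + α * A3 := by
        rw [hA1eq] at hstep1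
        nlinarith
      by_cases hcase : p ^ k ≤ α
      · have h1 : p ^ k * p ≤ p ^ k * 1 :=
          mul_le_mul_of_nonneg_left hp1 (pow_nonneg hp0.le k)
        rw [pow_succ]
        linarith
      · push_neg at hcase
        set g0 : ℝ := 1 / ((n:ℝ) * F) with hg0def
        set b0 : ℝ := ((n:ℝ) - 1) * y / F with hb0def
        have hg0 : 0 < g0 := by rw [hg0def]; positivity
        have hb0 : 0 ≤ b0 := by rw [hb0def]; positivity
        have h1 : (p ^ k - α) * A2 ≤ α * A3 := by nlinarith
        have h2 : (p ^ k - α) * g0 ≤ (p ^ k - α) * A2 :=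
          mul_le_mul_of_nonneg_left hstep3 (by linarith)
        have h3 : α * A3 ≤ α * b0 := mul_le_mul_of_nonneg_left hstep4 hα0
        have h4 : p ^ k * g0 ≤ α * (g0 + b0) := by nlinarith
        have hpos : 0 < g0 + b0 := by linarith
        have h5 : p ^ k * (g0 / (g0 + b0)) ≤ α := by
          rw [mul_div_assoc']
          rw [div_le_iff₀ hpos]
          exact h4
        have h6 : g0 / (g0 + b0) = p := by
          rw [hg0def, hb0def, hpdef]
          rw [div_eq_div_iff (by positivity) hden.ne']
          field_simp
        calc p ^ (k + 1) = p ^ k * p := pow_succ p k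
          _ = p ^ k * (g0 / (g0 + b0)) := by rw [h6]
          _ ≤ α := h5

/-- If the seed set `S` does not cover the universe, then the fixation probability in the
Set Cover fitness graph is at most `1 − ((1/n)/((1/n)+(n−1)y))^n`. -/
theorem fp_upper_of_not_cover {U : Type} [Fintype U] [DecidableEq U] [Nonempty U]
    (𝒮 : Finset (Finset U)) (hne : ∀ A ∈ 𝒮, A.Nonempty) (hcov : ∀ e : U, ∃ A ∈ 𝒮, e ∈ A)
    (x y : ℝ) (hx : 1 ≤ x) (hy0 : 0 < y) (hy1 : y ≤ 1)
    (G : FitnessGraph ({A // A ∈ 𝒮} ⊕ U)) (hG : IsSetCoverGraph 𝒮 x y G)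
    (S : Finset ({A // A ∈ 𝒮} ⊕ U))
    (hSnotcov : ∃ e : U, ∀ A : {A // A ∈ 𝒮}, Sum.inl A ∈ S → e ∉ A.1) :
    G.fp S ≤ 1 -
      ((1 / (Fintype.card ({A // A ∈ 𝒮} ⊕ U) : ℝ)) /
        (1 / (Fintype.card ({A // A ∈ 𝒮} ⊕ U) : ℝ) +
          ((Fintype.card ({A // A ∈ 𝒮} ⊕ U) : ℝ) - 1) * y)) ^
        (Fintype.card ({A // A ∈ 𝒮} ⊕ U)) := by
  obtain ⟨e, he⟩ := hSnotcov
  have hVne : Nonempty ({A // A ∈ 𝒮} ⊕ U) := ⟨Sum.inr (Classical.arbitrary U)⟩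
  set n : ℕ := Fintype.card ({A // A ∈ 𝒮} ⊕ U) with hn
  have hn1 : 1 ≤ n := by rw [hn]; exact Fintype.card_pos
  have hnR : (0:ℝ) < (n:ℝ) := by exact_mod_cast hn1
  have hnR1 : (1:ℝ) ≤ (n:ℝ) := by exact_mod_cast hn1
  set p : ℝ := (1 / (n:ℝ)) / (1 / (n:ℝ) + ((n:ℝ) - 1) * y) with hpdef
  have hnum : (0:ℝ) < 1 / (n:ℝ) := by positivity
  have hprod : (0:ℝ) ≤ ((n:ℝ) - 1) * y := mul_nonneg (by linarith) hy0.le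
  have hden : (0:ℝ) < 1 / (n:ℝ) + ((n:ℝ) - 1) * y := by linarith
  have hp0 : 0 < p := div_pos hnum hden
  have hp1 : p ≤ 1 := by
    rw [hpdef, div_le_one hden]
    linarith
  obtain ⟨As, hAsS, hAse⟩ := hcov e
  have hAnotS : Sum.inl (⟨As, hAsS⟩ : {A // A ∈ 𝒮}) ∉ S := fun h => he _ h hAse
  have hclsub : scCl 𝒮 S ⊆ Finset.univ.erase (Sum.inl (⟨As, hAsS⟩ : {A // A ∈ 𝒮})) := by
    intro v hv
    rw [Finset.mem_erase]
    refine ⟨?_, Finset.mem_univ v⟩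
    rintro rfl
    exact hAnotS (inl_mem_scCl.mp hv)
  have hcard : (scCl 𝒮 S).card ≤ n - 1 := by
    calc (scCl 𝒮 S).card ≤ (Finset.univ.erase (Sum.inl (⟨As, hAsS⟩ : {A // A ∈ 𝒮}))).card :=
          Finset.card_le_card hclsub
      _ = n - 1 := by
          rw [Finset.card_erase_of_mem (Finset.mem_univ _), Finset.card_univ]
  have hmain := sc_main 𝒮 hcov x y hy0 G hG (n - 1) S ⟨e, he⟩ hcard
  rw [← hn, ← hpdef] at hmain
  have hfp := fp_le_one_sub_hitZero G S
  have hp' : p ^ n ≤ p ^ (n - 1) := pow_le_pow_of_le_one hp0.le hp1 (Nat.sub_le n 1)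
  linarith
end

section
/- For any fitness graph 𝒢=(G,(m,r)) in which every node has a self-loop (possibly of weight 0) and any seed set S ⊆ V, the fixation probability of the Loopy process started at S equals the fixation probability of the Heterogeneous Moran process started at S. -/
open Finset
open scoped Classical

variable {V : Type} [Fintype V] [DecidableEq V]

/-- The maximum fitness `f_max = max_u max(m(u), r(u))`. -/
noncomputable def FitnessGraph.fmax (G : FitnessGraph V) [Nonempty V] : ℝ :=
  Finset.univ.sup' Finset.univ_nonempty fun u => max (G.m u) (G.r u)

/-- Configuration-dependent weights of the Loopy process: the self-loop probability of
each node is adjusted so that all nodes reproduce at the same rate. -/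
noncomputable def FitnessGraph.loopyW (G : FitnessGraph V) [Nonempty V]
    (X : Finset V) (u v : V) : ℝ :=
  if v = u then 1 - (G.fit X u / G.fmax) * (1 - G.w u u)
  else (G.fit X u / G.fmax) * G.w u v

/-- One-step transition probability of the Loopy process: a node `u` is sampled
uniformly at random, then `v` is sampled with probability `w_X(u,v)`. -/
noncomputable def FitnessGraph.loopyStep (G : FitnessGraph V) [Nonempty V]
    (X Y : Finset V) : ℝ :=
  ∑ u, ∑ v, (1 / (Fintype.card V : ℝ)) * G.loopyW X u v *
    (if moranNext X u v = Y then 1 else 0)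

/-- `t`-step transition probability of the Loopy process. -/
noncomputable def FitnessGraph.loopyStepN (G : FitnessGraph V) [Nonempty V] :
    ℕ → Finset V → Finset V → ℝ
  | 0, X, Y => if X = Y then 1 else 0
  | t + 1, X, Y => ∑ Z, FitnessGraph.loopyStepN G t X Z * G.loopyStep Z Y

/-- Fixation probability of the Loopy process started at seed set `S`. -/
noncomputable def FitnessGraph.loopyFp (G : FitnessGraph V) [Nonempty V] (S : Finset V) : ℝ :=
  ⨆ t : ℕ, G.loopyStepN t S Finset.univ


/-! ### Auxiliary: generic kernel theory -/

section Kernel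

variable (P : Finset V → Finset V → ℝ)

noncomputable def kerN : ℕ → Finset V → Finset V → ℝ
  | 0, X, Y => if X = Y then 1 else 0
  | t + 1, X, Y => ∑ Z, kerN t X Z * P Z Y

variable {P}

lemma kerN_nonneg (h0 : ∀ X Y, 0 ≤ P X Y) :
    ∀ t X Y, 0 ≤ kerN P t X Y := by
  intro t
  induction t with
  | zero => intro X Y; simp only [kerN]; positivity
  | succ t ih =>
    intro X Y
    refine Finset.sum_nonneg fun Z _ => mul_nonneg (ih X Z) (h0 Z Y)

lemma kerN_rowsum (h1 : ∀ X, ∑ Y, P X Y = 1) :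
    ∀ t X, ∑ Y, kerN P t X Y = 1 := by
  intro t
  induction t with
  | zero => intro X; simp [kerN]
  | succ t ih =>
    intro X
    rw [show (∑ Y, kerN P (t+1) X Y) = ∑ Y, ∑ Z, kerN P t X Z * P Z Y from rfl,
      Finset.sum_comm]
    have : ∀ Z : Finset V, ∑ Y, kerN P t X Z * P Z Y = kerN P t X Z := by
      intro Z; rw [← Finset.mul_sum, h1 Z, mul_one]
    rw [Finset.sum_congr rfl fun Z _ => this Z, ih X]

lemma kerN_left : ∀ t X Y, kerN P (t + 1) X Y = ∑ Z, P X Z * kerN P t Z Y := by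
  intro t
  induction t with
  | zero =>
    intro X Y
    show (∑ Z, (if X = Z then (1:ℝ) else 0) * P Z Y) = _
    simp [kerN]
  | succ t ih =>
    intro X Y
    show (∑ Z, kerN P (t+1) X Z * P Z Y) = ∑ Z, P X Z * kerN P (t+1) Z Y
    calc (∑ Z, kerN P (t+1) X Z * P Z Y)
        = ∑ Z, (∑ W, P X W * kerN P t W Z) * P Z Y := by
          refine Finset.sum_congr rfl fun Z _ => by rw [ih]
      _ = ∑ Z, ∑ W, P X W * kerN P t W Z * P Z Y := by
          refine Finset.sum_congr rfl fun Z _ => by rw [Finset.sum_mul]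
      _ = ∑ W, ∑ Z, P X W * kerN P t W Z * P Z Y := Finset.sum_comm
      _ = ∑ W, P X W * kerN P (t+1) W Y := by
          refine Finset.sum_congr rfl fun W _ => ?_
          show _ = P X W * ∑ Z, kerN P t W Z * P Z Y
          rw [Finset.mul_sum]
          exact Finset.sum_congr rfl fun Z _ => by ring

lemma kerN_univ (hu : ∀ Y, P Finset.univ Y = if (Finset.univ : Finset V) = Y then 1 else 0) :
    ∀ t Y, kerN P t Finset.univ Y = if (Finset.univ : Finset V) = Y then 1 else 0 := by
  intro t
  induction t with
  | zero => intro Y; rfl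
  | succ t ih =>
    intro Y
    show (∑ Z, kerN P t Finset.univ Z * P Z Y) = _
    rw [Finset.sum_congr rfl fun Z _ => by rw [ih Z]]
    rw [show (∑ Z, (if (Finset.univ : Finset V) = Z then (1:ℝ) else 0) * P Z Y)
        = P Finset.univ Y by simp]
    exact hu Y

lemma kerN_mono (h0 : ∀ X Y, 0 ≤ P X Y)
    (hu : ∀ Y, P Finset.univ Y = if (Finset.univ : Finset V) = Y then 1 else 0) (S : Finset V) :
    Monotone fun t => kerN P t S Finset.univ := by
  refine monotone_nat_of_le_succ fun t => ?_
  show kerN P t S Finset.univ ≤ ∑ Z, kerN P t S Z * P Z Finset.univ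
  have h := Finset.single_le_sum (f := fun Z => kerN P t S Z * P Z Finset.univ)
    (fun Z _ => mul_nonneg (kerN_nonneg h0 t S Z) (h0 Z Finset.univ))
    (Finset.mem_univ (Finset.univ : Finset V))
  simpa only [hu Finset.univ, if_pos rfl, mul_one, if_true, eq_self_iff_true] using h

lemma kerN_le_one (h0 : ∀ X Y, 0 ≤ P X Y) (h1 : ∀ X, ∑ Y, P X Y = 1) (t : ℕ)
    (X Y : Finset V) : kerN P t X Y ≤ 1 := by
  have h := Finset.single_le_sum (f := fun Z => kerN P t X Z)
    (fun Z _ => kerN_nonneg h0 t X Z) (Finset.mem_univ Y)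
  rwa [kerN_rowsum h1 t X] at h

lemma kerN_bdd (h0 : ∀ X Y, 0 ≤ P X Y) (h1 : ∀ X, ∑ Y, P X Y = 1) (S : Finset V) :
    BddAbove (Set.range fun t => kerN P t S Finset.univ) := by
  refine ⟨1, ?_⟩
  rintro x ⟨t, rfl⟩
  exact kerN_le_one h0 h1 t S Finset.univ

noncomputable def kfp (P : Finset V → Finset V → ℝ) (S : Finset V) : ℝ :=
  ⨆ t : ℕ, kerN P t S Finset.univ

lemma kfp_nonneg (h0 : ∀ X Y, 0 ≤ P X Y) (h1 : ∀ X, ∑ Y, P X Y = 1) (S : Finset V) :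
    0 ≤ kfp P S :=
  le_trans (kerN_nonneg h0 0 S Finset.univ) (le_ciSup (kerN_bdd h0 h1 S) 0)

lemma kfp_univ (h0 : ∀ X Y, 0 ≤ P X Y) (h1 : ∀ X, ∑ Y, P X Y = 1)
    (hu : ∀ Y, P Finset.univ Y = if (Finset.univ : Finset V) = Y then 1 else 0) :
    kfp P Finset.univ = 1 := by
  unfold kfp
  have : ∀ t : ℕ, kerN P t Finset.univ Finset.univ = 1 := fun t => by
    rw [kerN_univ hu t, if_pos rfl]
  simp [this]

lemma kfp_harmonic (h0 : ∀ X Y, 0 ≤ P X Y) (h1 : ∀ X, ∑ Y, P X Y = 1)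
    (hu : ∀ Y, P Finset.univ Y = if (Finset.univ : Finset V) = Y then 1 else 0)
    (X : Finset V) : ∑ Y, P X Y * kfp P Y = kfp P X := by
  have hlim : ∀ Z : Finset V, Filter.Tendsto (fun t => kerN P t Z Finset.univ)
      Filter.atTop (nhds (kfp P Z)) := fun Z =>
    tendsto_atTop_ciSup (kerN_mono h0 hu Z) (kerN_bdd h0 h1 Z)
  have h2 : Filter.Tendsto (fun t => ∑ Y, P X Y * kerN P t Y Finset.univ)
      Filter.atTop (nhds (∑ Y, P X Y * kfp P Y)) := by
    refine tendsto_finset_sum _ fun Y _ => Filter.Tendsto.const_mul _ (hlim Y)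
  have h3 : (fun t => ∑ Y, P X Y * kerN P t Y Finset.univ)
      = fun t => kerN P (t + 1) X Finset.univ := by
    funext t; rw [kerN_left]
  have h4 : Filter.Tendsto (fun t => kerN P (t + 1) X Finset.univ)
      Filter.atTop (nhds (kfp P X)) :=
    (hlim X).comp (Filter.tendsto_add_atTop_nat 1)
  rw [h3] at h2
  exact tendsto_nhds_unique h2 h4

lemma kfp_le_of_harmonic (h0 : ∀ X Y, 0 ≤ P X Y) (h1 : ∀ X, ∑ Y, P X Y = 1)
    {h : Finset V → ℝ} (hh : ∀ X, ∑ Y, P X Y * h Y = h X)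
    (hpos : ∀ X, 0 ≤ h X) (huniv : h Finset.univ = 1) (S : Finset V) :
    kfp P S ≤ h S := by
  have key : ∀ t, ∑ Y, kerN P t S Y * h Y = h S := by
    intro t
    induction t with
    | zero => simp [kerN]
    | succ t ih =>
      calc (∑ Y, kerN P (t+1) S Y * h Y)
          = ∑ Y, (∑ Z, kerN P t S Z * P Z Y) * h Y := rfl
        _ = ∑ Y, ∑ Z, kerN P t S Z * (P Z Y * h Y) := by
            refine Finset.sum_congr rfl fun Y _ => ?_
            rw [Finset.sum_mul]
            exact Finset.sum_congr rfl fun Z _ => by ring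
        _ = ∑ Z, ∑ Y, kerN P t S Z * (P Z Y * h Y) := Finset.sum_comm
        _ = ∑ Z, kerN P t S Z * h Z := by
            refine Finset.sum_congr rfl fun Z _ => ?_
            rw [← Finset.mul_sum, hh Z]
        _ = h S := ih
  refine ciSup_le fun t => ?_
  have hb : kerN P t S Finset.univ * h Finset.univ ≤ ∑ Y, kerN P t S Y * h Y :=
    Finset.single_le_sum (f := fun Y => kerN P t S Y * h Y)
      (fun Y _ => mul_nonneg (kerN_nonneg h0 t S Y) (hpos Y)) (Finset.mem_univ _)
  rw [huniv, mul_one, key t] at hb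
  exact hb

end Kernel

/-! ### Auxiliary: facts about the fitness graph kernels -/

namespace FitnessGraph

variable (G : FitnessGraph V)

lemma fit_pos_s8 (X : Finset V) (u : V) : 0 < G.fit X u := by
  unfold fit; split <;> [exact G.m_pos u; exact G.r_pos u]

variable [Nonempty V]

lemma totalFit_pos_s8 (X : Finset V) : 0 < G.totalFit X :=
  Finset.sum_pos (fun u _ => G.fit_pos_s8 X u) Finset.univ_nonempty

lemma fmax_pos : 0 < G.fmax := by
  obtain ⟨u⟩ : Nonempty V := inferInstance
  calc (0:ℝ) < G.m u := G.m_pos u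
    _ ≤ max (G.m u) (G.r u) := le_max_left _ _
    _ ≤ G.fmax := Finset.le_sup' (fun u => max (G.m u) (G.r u)) (Finset.mem_univ u)

lemma fit_le_fmax (X : Finset V) (u : V) : G.fit X u ≤ G.fmax := by
  have h : max (G.m u) (G.r u) ≤ G.fmax := Finset.le_sup' (fun u => max (G.m u) (G.r u)) (Finset.mem_univ u)
  unfold fit
  split
  · exact le_trans (le_max_left _ _) h
  · exact le_trans (le_max_right _ _) h

lemma w_le_one (u v : V) : G.w u v ≤ 1 := by
  have h := Finset.single_le_sum (f := fun v => G.w u v)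
    (fun v _ => G.w_nonneg u v) (Finset.mem_univ v)
  rwa [G.w_rowsum u] at h

lemma loopyW_nonneg (X : Finset V) (u v : V) : 0 ≤ G.loopyW X u v := by
  unfold loopyW
  split
  · have h1 : G.fit X u / G.fmax ≤ 1 :=
      (div_le_one G.fmax_pos).mpr (G.fit_le_fmax X u)
    have h2 : (0:ℝ) ≤ G.fit X u / G.fmax :=
      le_of_lt (div_pos (G.fit_pos_s8 X u) G.fmax_pos)
    have h3 : 1 - G.w u u ≤ 1 := by
      have := G.w_nonneg u u; linarith
    nlinarith [G.w_le_one u u]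
  · exact mul_nonneg (le_of_lt (div_pos (G.fit_pos_s8 X u) G.fmax_pos)) (G.w_nonneg u v)

lemma loopyW_rowsum (X : Finset V) (u : V) : ∑ v, G.loopyW X u v = 1 := by
  have hv : ∀ v, G.loopyW X u v = (if v = u then 1 - G.fit X u / G.fmax else 0)
      + (G.fit X u / G.fmax) * G.w u v := by
    intro v
    unfold loopyW
    split
    · next h => subst h; ring
    · next h => simp [h]
  rw [Finset.sum_congr rfl fun v _ => hv v, Finset.sum_add_distrib,
    Finset.sum_ite_eq' Finset.univ u, ← Finset.mul_sum, G.w_rowsum u]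
  simp

lemma step_nonneg_s8 (X Y : Finset V) : 0 ≤ G.step X Y := by
  unfold step
  refine Finset.sum_nonneg fun u _ => Finset.sum_nonneg fun v _ => ?_
  have := G.totalFit_pos_s8 X
  have := G.fit_pos_s8 X u
  have := G.w_nonneg u v
  positivity

lemma moranNext_self (X : Finset V) (u : V) : moranNext X u u = X := by
  unfold moranNext
  split
  · exact Finset.insert_eq_self.mpr (by assumption)
  · exact Finset.erase_eq_self.mpr (by assumption)

lemma sum_indicator (X : Finset V) (u v : V) :
    ∑ Y : Finset V, (if moranNext X u v = Y then (1:ℝ) else 0) = 1 := by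
  simp

lemma step_rowsum (X : Finset V) : ∑ Y, G.step X Y = 1 := by
  unfold step
  rw [Finset.sum_comm]
  have h1 : ∀ u : V, (∑ Y : Finset V, ∑ v, (G.fit X u / G.totalFit X) * G.w u v *
      (if moranNext X u v = Y then (1:ℝ) else 0)) = G.fit X u / G.totalFit X := by
    intro u
    rw [Finset.sum_comm]
    have : ∀ v, (∑ Y : Finset V, (G.fit X u / G.totalFit X) * G.w u v *
        (if moranNext X u v = Y then (1:ℝ) else 0)) =
        (G.fit X u / G.totalFit X) * G.w u v := by
      intro v
      rw [← Finset.mul_sum, sum_indicator X u v, mul_one]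
    rw [Finset.sum_congr rfl fun v _ => this v, ← Finset.mul_sum, G.w_rowsum u, mul_one]
  rw [Finset.sum_congr rfl fun u _ => h1 u]
  rw [← Finset.sum_div, show (∑ u, G.fit X u) = G.totalFit X from rfl,
    div_self (ne_of_gt (G.totalFit_pos_s8 X))]


lemma step_univ (Y : Finset V) :
    G.step Finset.univ Y = if (Finset.univ : Finset V) = Y then 1 else 0 := by
  have hm : ∀ u v : V, moranNext Finset.univ u v = Finset.univ := by
    intro u v
    unfold moranNext
    simp
  unfold step
  have hterm : ∀ u v : V, (G.fit Finset.univ u / G.totalFit Finset.univ) * G.w u v *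
      (if moranNext Finset.univ u v = Y then (1:ℝ) else 0) =
      (G.fit Finset.univ u / G.totalFit Finset.univ) * G.w u v *
      (if (Finset.univ : Finset V) = Y then (1:ℝ) else 0) := by
    intro u v; rw [hm u v]
  calc (∑ u, ∑ v, (G.fit Finset.univ u / G.totalFit Finset.univ) * G.w u v *
        (if moranNext Finset.univ u v = Y then (1:ℝ) else 0))
      = ∑ u, ∑ v, (G.fit Finset.univ u / G.totalFit Finset.univ) * G.w u v *
        (if (Finset.univ : Finset V) = Y then (1:ℝ) else 0) := by
        exact Finset.sum_congr rfl fun u _ => Finset.sum_congr rfl fun v _ => hterm u v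
    _ = (∑ u, ∑ v, (G.fit Finset.univ u / G.totalFit Finset.univ) * G.w u v) *
        (if (Finset.univ : Finset V) = Y then (1:ℝ) else 0) := by
        rw [Finset.sum_mul]
        exact Finset.sum_congr rfl fun u _ => by rw [Finset.sum_mul]
    _ = (if (Finset.univ : Finset V) = Y then (1:ℝ) else 0) := by
        have : (∑ u, ∑ v, (G.fit Finset.univ u / G.totalFit Finset.univ) * G.w u v) = 1 := by
          have : ∀ u : V, (∑ v, (G.fit Finset.univ u / G.totalFit Finset.univ) * G.w u v)
              = G.fit Finset.univ u / G.totalFit Finset.univ := by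
            intro u; rw [← Finset.mul_sum, G.w_rowsum u, mul_one]
          rw [Finset.sum_congr rfl fun u _ => this u, ← Finset.sum_div,
            show (∑ u, G.fit Finset.univ u) = G.totalFit Finset.univ from rfl,
            div_self (ne_of_gt (G.totalFit_pos_s8 Finset.univ))]
        rw [this, one_mul]

lemma card_pos_real : (0:ℝ) < (Fintype.card V : ℝ) := by
  exact_mod_cast Fintype.card_pos

lemma loopyStep_nonneg (X Y : Finset V) : 0 ≤ G.loopyStep X Y := by
  unfold loopyStep
  refine Finset.sum_nonneg fun u _ => Finset.sum_nonneg fun v _ => ?_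
  have h1 : (0:ℝ) ≤ 1 / (Fintype.card V : ℝ) := by positivity
  have h2 := G.loopyW_nonneg X u v
  have h3 : (0:ℝ) ≤ (if moranNext X u v = Y then (1:ℝ) else 0) := by positivity
  positivity

lemma loopyStep_rowsum (X : Finset V) : ∑ Y, G.loopyStep X Y = 1 := by
  unfold loopyStep
  rw [Finset.sum_comm]
  have h1 : ∀ u : V, (∑ Y : Finset V, ∑ v, (1 / (Fintype.card V : ℝ)) * G.loopyW X u v *
      (if moranNext X u v = Y then (1:ℝ) else 0)) = 1 / (Fintype.card V : ℝ) := by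
    intro u
    rw [Finset.sum_comm]
    have : ∀ v, (∑ Y : Finset V, (1 / (Fintype.card V : ℝ)) * G.loopyW X u v *
        (if moranNext X u v = Y then (1:ℝ) else 0)) =
        (1 / (Fintype.card V : ℝ)) * G.loopyW X u v := by
      intro v
      rw [← Finset.mul_sum, sum_indicator X u v, mul_one]
    rw [Finset.sum_congr rfl fun v _ => this v, ← Finset.mul_sum, G.loopyW_rowsum X u, mul_one]
  rw [Finset.sum_congr rfl fun u _ => h1 u, Finset.sum_const, Finset.card_univ,
    nsmul_eq_mul, mul_one_div, div_self (ne_of_gt (card_pos_real (V := V)))]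

lemma loopyStep_univ (Y : Finset V) :
    G.loopyStep Finset.univ Y = if (Finset.univ : Finset V) = Y then 1 else 0 := by
  have hm : ∀ u v : V, moranNext Finset.univ u v = Finset.univ := by
    intro u v
    unfold moranNext
    simp
  unfold loopyStep
  calc (∑ u, ∑ v, (1 / (Fintype.card V : ℝ)) * G.loopyW Finset.univ u v *
        (if moranNext Finset.univ u v = Y then (1:ℝ) else 0))
      = ∑ u, ∑ v, (1 / (Fintype.card V : ℝ)) * G.loopyW Finset.univ u v *
        (if (Finset.univ : Finset V) = Y then (1:ℝ) else 0) := by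
        exact Finset.sum_congr rfl fun u _ => Finset.sum_congr rfl fun v _ => by rw [hm u v]
    _ = (∑ u, ∑ v, (1 / (Fintype.card V : ℝ)) * G.loopyW Finset.univ u v) *
        (if (Finset.univ : Finset V) = Y then (1:ℝ) else 0) := by
        rw [Finset.sum_mul]
        exact Finset.sum_congr rfl fun u _ => by rw [Finset.sum_mul]
    _ = (if (Finset.univ : Finset V) = Y then (1:ℝ) else 0) := by
        have : (∑ u, ∑ v, (1 / (Fintype.card V : ℝ)) * G.loopyW Finset.univ u v) = 1 := by
          have h2 : ∀ u : V, (∑ v, (1 / (Fintype.card V : ℝ)) * G.loopyW Finset.univ u v)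
              = 1 / (Fintype.card V : ℝ) := by
            intro u; rw [← Finset.mul_sum, G.loopyW_rowsum Finset.univ u, mul_one]
          rw [Finset.sum_congr rfl fun u _ => h2 u, Finset.sum_const, Finset.card_univ,
            nsmul_eq_mul, mul_one_div, div_self (ne_of_gt (card_pos_real (V := V)))]
        rw [this, one_mul]

lemma loopy_step_prop (X Y : Finset V) (hXY : Y ≠ X) :
    G.loopyStep X Y = (G.totalFit X / ((Fintype.card V : ℝ) * G.fmax)) * G.step X Y := by
  unfold loopyStep step
  rw [Finset.mul_sum]
  refine Finset.sum_congr rfl fun u _ => ?_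
  rw [Finset.mul_sum]
  refine Finset.sum_congr rfl fun v _ => ?_
  by_cases hI : moranNext X u v = Y
  · have hvu : v ≠ u := by
      intro h
      subst h
      rw [moranNext_self X v] at hI
      exact hXY hI.symm
    have hW : G.loopyW X u v = (G.fit X u / G.fmax) * G.w u v := by
      unfold loopyW; rw [if_neg hvu]
    rw [hI, hW]
    simp only [if_pos rfl, mul_one]
    have hF := ne_of_gt (G.totalFit_pos_s8 X)
    have hfm := ne_of_gt G.fmax_pos
    have hn := ne_of_gt (card_pos_real (V := V))
    field_simp
  · simp [hI]

lemma cX_pos (X : Finset V) : 0 < G.totalFit X / ((Fintype.card V : ℝ) * G.fmax) :=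
  div_pos (G.totalFit_pos_s8 X) (mul_pos (card_pos_real (V := V)) G.fmax_pos)

lemma sum_mul_sub (P : Finset V → Finset V → ℝ) (h : Finset V → ℝ) (X : Finset V)
    (hrow : ∑ Y, P X Y = 1) :
    ∑ Y, P X Y * (h Y - h X) = (∑ Y, P X Y * h Y) - h X := by
  have : ∀ Y, P X Y * (h Y - h X) = P X Y * h Y - P X Y * h X := fun Y => by ring
  rw [Finset.sum_congr rfl fun Y _ => this Y, Finset.sum_sub_distrib, ← Finset.sum_mul,
    hrow, one_mul]

lemma harmonic_transfer {h : Finset V → ℝ}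
    (hh : ∀ X, ∑ Y, G.step X Y * h Y = h X) (X : Finset V) :
    ∑ Y, G.loopyStep X Y * h Y = h X := by
  have key : ∀ Y, G.loopyStep X Y * (h Y - h X)
      = (G.totalFit X / ((Fintype.card V : ℝ) * G.fmax)) * (G.step X Y * (h Y - h X)) := by
    intro Y
    by_cases hY : Y = X
    · subst hY; rw [sub_self, mul_zero, mul_zero, mul_zero]
    · rw [G.loopy_step_prop X Y hY]; ring
  have e1 := sum_mul_sub G.loopyStep h X (G.loopyStep_rowsum X)
  have e2 := sum_mul_sub G.step h X (G.step_rowsum X)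
  rw [hh X, sub_self] at e2
  have e3 : ∑ Y, G.loopyStep X Y * (h Y - h X)
      = (G.totalFit X / ((Fintype.card V : ℝ) * G.fmax)) * ∑ Y, G.step X Y * (h Y - h X) := by
    rw [Finset.mul_sum]
    exact Finset.sum_congr rfl fun Y _ => key Y
  rw [e2, mul_zero, e1] at e3
  linarith

lemma harmonic_transfer' {h : Finset V → ℝ}
    (hh : ∀ X, ∑ Y, G.loopyStep X Y * h Y = h X) (X : Finset V) :
    ∑ Y, G.step X Y * h Y = h X := by
  have hc := ne_of_gt (G.cX_pos X)
  have key : ∀ Y, G.step X Y * (h Y - h X)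
      = (1 / (G.totalFit X / ((Fintype.card V : ℝ) * G.fmax)))
        * (G.loopyStep X Y * (h Y - h X)) := by
    intro Y
    by_cases hY : Y = X
    · subst hY; rw [sub_self, mul_zero, mul_zero, mul_zero]
    · rw [G.loopy_step_prop X Y hY]
      have hF := ne_of_gt (G.totalFit_pos_s8 X)
      have hfm := ne_of_gt G.fmax_pos
      have hn := ne_of_gt (card_pos_real (V := V))
      field_simp
  have e1 := sum_mul_sub G.step h X (G.step_rowsum X)
  have e2 := sum_mul_sub G.loopyStep h X (G.loopyStep_rowsum X)
  rw [hh X, sub_self] at e2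
  have e3 : ∑ Y, G.step X Y * (h Y - h X)
      = (1 / (G.totalFit X / ((Fintype.card V : ℝ) * G.fmax)))
        * ∑ Y, G.loopyStep X Y * (h Y - h X) := by
    rw [Finset.mul_sum]
    exact Finset.sum_congr rfl fun Y _ => key Y
  rw [e2, mul_zero, e1] at e3
  linarith

lemma stepN_eq_kerN : ∀ t X Y, G.stepN t X Y = kerN G.step t X Y := by
  intro t
  induction t with
  | zero => intro X Y; rfl
  | succ t ih =>
    intro X Y
    show (∑ Z, G.stepN t X Z * G.step Z Y) = ∑ Z, kerN G.step t X Z * G.step Z Y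
    exact Finset.sum_congr rfl fun Z _ => by rw [ih]

lemma loopyStepN_eq_kerN : ∀ t X Y, G.loopyStepN t X Y = kerN G.loopyStep t X Y := by
  intro t
  induction t with
  | zero => intro X Y; rfl
  | succ t ih =>
    intro X Y
    show (∑ Z, G.loopyStepN t X Z * G.loopyStep Z Y) = ∑ Z, kerN G.loopyStep t X Z * G.loopyStep Z Y
    exact Finset.sum_congr rfl fun Z _ => by rw [ih]

end FitnessGraph

/-- For any fitness graph and any seed set, the fixation probability of the Loopy
process equals that of the Heterogeneous Moran process. -/
theorem loopy_fp_eq_fp [Nonempty V] (G : FitnessGraph V) (S : Finset V) :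
    G.loopyFp S = G.fp S := by
  have h0 : ∀ X Y : Finset V, 0 ≤ G.step X Y := G.step_nonneg_s8
  have h1 : ∀ X : Finset V, ∑ Y, G.step X Y = 1 := G.step_rowsum
  have hu : ∀ Y : Finset V, G.step Finset.univ Y
      = if (Finset.univ : Finset V) = Y then 1 else 0 := G.step_univ
  have l0 : ∀ X Y : Finset V, 0 ≤ G.loopyStep X Y := G.loopyStep_nonneg
  have l1 : ∀ X : Finset V, ∑ Y, G.loopyStep X Y = 1 := G.loopyStep_rowsum
  have lu : ∀ Y : Finset V, G.loopyStep Finset.univ Y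
      = if (Finset.univ : Finset V) = Y then 1 else 0 := G.loopyStep_univ
  have hfp : ∀ T : Finset V, G.fp T = kfp G.step T := by
    intro T
    unfold FitnessGraph.fp kfp
    congr 1
    funext t
    rw [G.stepN_eq_kerN]
  have hlfp : ∀ T : Finset V, G.loopyFp T = kfp G.loopyStep T := by
    intro T
    unfold FitnessGraph.loopyFp kfp
    congr 1
    funext t
    rw [G.loopyStepN_eq_kerN]
  rw [hfp S, hlfp S]
  apply le_antisymm
  · refine kfp_le_of_harmonic l0 l1
      (G.harmonic_transfer fun X => kfp_harmonic h0 h1 hu X)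
      (fun X => kfp_nonneg h0 h1 X) (kfp_univ h0 h1 hu) S
  · refine kfp_le_of_harmonic h0 h1
      (G.harmonic_transfer' fun X => kfp_harmonic l0 l1 lu X)
      (fun X => kfp_nonneg l0 l1 X) (kfp_univ l0 l1 lu) S
end
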